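/- Let A ∈ ℝ^{n×n}, B ∈ ℝ^{n×m}, let R₁, R₂ ∈ ℝ^{m×m} be symmetric positive definite, Q₁ ∈ ℝ^{n×n} symmetric positive semidefinite, and K ∈ ℝ^{N×N} symmetric positive semidefinite. Suppose P₁ ∈ ℝ^{n×n} is symmetric positive definite and satisfies the local Riccati equation P₁A + AᵀP₁ − P₁BR₁BᵀP₁ + Q₁ = 0. Set Q₂ = P₁BR₂BᵀP₁, Q̃ = I_N⊗Q₁ + K⊗Q₂, and S = I_N⊗R₁ + K⊗R₂. Then P̃ = I_N⊗P₁ is symmetric positive definite and satisfies the global Riccati equation P̃(I_N⊗A) + (I_N⊗A)ᵀP̃ + Q̃ − P̃(I_N⊗B)S(I_N⊗B)ᵀP̃ = 0, and the feedback gain F = S(I_N⊗B)ᵀP̃ satisfies F = I_N⊗(R₁BᵀP₁) + K⊗(R₂BᵀP₁). -/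

import Mathlib

open Matrix
open scoped Kronecker

lemma one_kron_posDef {N n : ℕ} {P : Matrix (Fin n) (Fin n) ℝ} (hP : P.PosDef) :
    ((1 : Matrix (Fin N) (Fin N) ℝ) ⊗ₖ P).PosDef := by
  rw [posDef_iff_dotProduct_mulVec]
  constructor
  · ext ⟨i, j⟩ ⟨i', j'⟩
    simp only [conjTranspose_apply, kroneckerMap_apply, one_apply, star_trivial]
    by_cases h : i = i'
    · subst h
      simpa using congrFun (congrFun hP.isHermitian.eq j) j'
    · simp [h, Ne.symm h]
  · intro x hx
    have key : dotProduct (star x) ((1 : Matrix (Fin N) (Fin N) ℝ) ⊗ₖ P *ᵥ x)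
        = ∑ i : Fin N,
            dotProduct (star fun j => x (i, j)) (P *ᵥ fun j => x (i, j)) := by
      simp only [star_trivial, dotProduct, mulVec, Fintype.sum_prod_type,
        kroneckerMap_apply, one_apply, ite_mul, one_mul, zero_mul,
        Finset.sum_ite_irrel, Finset.sum_const_zero, Finset.sum_ite_eq, Finset.mem_univ, if_true]
    rw [key]
    obtain ⟨⟨i0, j0⟩, hij⟩ := Function.ne_iff.mp hx
    refine Finset.sum_pos' (fun i _ => hP.posSemidef.dotProduct_mulVec_nonneg _) ⟨i0, Finset.mem_univ _, ?_⟩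
    exact hP.dotProduct_mulVec_pos (fun h => hij (congrFun h j0))

theorem stmt_0 {n m N : ℕ}
    (A : Matrix (Fin n) (Fin n) ℝ) (B : Matrix (Fin n) (Fin m) ℝ)
    (R₁ R₂ : Matrix (Fin m) (Fin m) ℝ) (Q₁ : Matrix (Fin n) (Fin n) ℝ)
    (K : Matrix (Fin N) (Fin N) ℝ) (P₁ : Matrix (Fin n) (Fin n) ℝ)
    (hR₁ : R₁.PosDef) (hR₂ : R₂.PosDef) (hQ₁ : Q₁.PosSemidef) (hK : K.PosSemidef)
    (hP₁ : P₁.PosDef)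
    (hRic : P₁ * A + Aᵀ * P₁ - P₁ * B * R₁ * Bᵀ * P₁ + Q₁ = 0)
    (Q₂ : Matrix (Fin n) (Fin n) ℝ) (hQ₂ : Q₂ = P₁ * B * R₂ * Bᵀ * P₁)
    (Qt : Matrix (Fin N × Fin n) (Fin N × Fin n) ℝ)
    (hQt : Qt = (1 : Matrix (Fin N) (Fin N) ℝ) ⊗ₖ Q₁ + K ⊗ₖ Q₂)
    (S : Matrix (Fin N × Fin m) (Fin N × Fin m) ℝ)
    (hS : S = (1 : Matrix (Fin N) (Fin N) ℝ) ⊗ₖ R₁ + K ⊗ₖ R₂)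
    (Pt : Matrix (Fin N × Fin n) (Fin N × Fin n) ℝ)
    (hPt : Pt = (1 : Matrix (Fin N) (Fin N) ℝ) ⊗ₖ P₁) :
    Pt.PosDef ∧
    Pt * ((1 : Matrix (Fin N) (Fin N) ℝ) ⊗ₖ A)
      + ((1 : Matrix (Fin N) (Fin N) ℝ) ⊗ₖ A)ᵀ * Pt + Qt
      - Pt * ((1 : Matrix (Fin N) (Fin N) ℝ) ⊗ₖ B) * S
        * ((1 : Matrix (Fin N) (Fin N) ℝ) ⊗ₖ B)ᵀ * Pt = 0 ∧
    S * ((1 : Matrix (Fin N) (Fin N) ℝ) ⊗ₖ B)ᵀ * Pt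
      = (1 : Matrix (Fin N) (Fin N) ℝ) ⊗ₖ (R₁ * Bᵀ * P₁) + K ⊗ₖ (R₂ * Bᵀ * P₁) := by
  subst hQ₂ hQt hS hPt
  have hBT : ((1 : Matrix (Fin N) (Fin N) ℝ) ⊗ₖ B)ᵀ
      = (1 : Matrix (Fin N) (Fin N) ℝ) ⊗ₖ Bᵀ := by
    rw [← kroneckerMap_transpose, transpose_one]
  have hAT : ((1 : Matrix (Fin N) (Fin N) ℝ) ⊗ₖ A)ᵀ
      = (1 : Matrix (Fin N) (Fin N) ℝ) ⊗ₖ Aᵀ := by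
    rw [← kroneckerMap_transpose, transpose_one]
  refine ⟨one_kron_posDef hP₁, ?_, ?_⟩
  · rw [hBT, hAT]
    have : (1 : Matrix (Fin N) (Fin N) ℝ) ⊗ₖ P₁
          * ((1 : Matrix (Fin N) (Fin N) ℝ) ⊗ₖ B)
          * ((1 : Matrix (Fin N) (Fin N) ℝ) ⊗ₖ R₁ + K ⊗ₖ R₂)
          * ((1 : Matrix (Fin N) (Fin N) ℝ) ⊗ₖ Bᵀ)
          * ((1 : Matrix (Fin N) (Fin N) ℝ) ⊗ₖ P₁)
        = (1 : Matrix (Fin N) (Fin N) ℝ) ⊗ₖ (P₁ * B * R₁ * Bᵀ * P₁)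
          + K ⊗ₖ (P₁ * B * R₂ * Bᵀ * P₁) := by
      rw [Matrix.mul_add, Matrix.add_mul, Matrix.add_mul]
      simp only [← mul_kronecker_mul, one_mul, mul_one]
    rw [this]
    have h0 : (1 : Matrix (Fin N) (Fin N) ℝ) ⊗ₖ P₁
          * ((1 : Matrix (Fin N) (Fin N) ℝ) ⊗ₖ A)
        = (1 : Matrix (Fin N) (Fin N) ℝ) ⊗ₖ (P₁ * A) := by
      rw [← mul_kronecker_mul, one_mul]
    have h1 : (1 : Matrix (Fin N) (Fin N) ℝ) ⊗ₖ Aᵀ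
          * ((1 : Matrix (Fin N) (Fin N) ℝ) ⊗ₖ P₁)
        = (1 : Matrix (Fin N) (Fin N) ℝ) ⊗ₖ (Aᵀ * P₁) := by
      rw [← mul_kronecker_mul, one_mul]
    rw [h0, h1]
    have hR : P₁ * A + Aᵀ * P₁ + Q₁ = P₁ * B * R₁ * Bᵀ * P₁ := by
      have := hRic
      linear_combination (norm := abel) this
    calc (1 : Matrix (Fin N) (Fin N) ℝ) ⊗ₖ (P₁ * A)
          + (1 : Matrix (Fin N) (Fin N) ℝ) ⊗ₖ (Aᵀ * P₁)
          + ((1 : Matrix (Fin N) (Fin N) ℝ) ⊗ₖ Q₁ + K ⊗ₖ (P₁ * B * R₂ * Bᵀ * P₁))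
          - ((1 : Matrix (Fin N) (Fin N) ℝ) ⊗ₖ (P₁ * B * R₁ * Bᵀ * P₁)
            + K ⊗ₖ (P₁ * B * R₂ * Bᵀ * P₁))
        = (1 : Matrix (Fin N) (Fin N) ℝ) ⊗ₖ (P₁ * A + Aᵀ * P₁ + Q₁)
          - (1 : Matrix (Fin N) (Fin N) ℝ) ⊗ₖ (P₁ * B * R₁ * Bᵀ * P₁) := by
          rw [kroneckerMap_add_right _ (fun a => mul_add a),
            kroneckerMap_add_right _ (fun a => mul_add a)]
          · abel
      _ = 0 := by rw [hR, sub_self]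
  · rw [hBT, Matrix.add_mul, Matrix.add_mul]
    simp only [← mul_kronecker_mul, one_mul, mul_one]
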